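/- arXiv:2410.08985 — 3 statements merged into one kernel-verified Lean document; each statement's English description precedes it below -/
import Mathlib

section
/- Let L_1, …, L_n be i.i.d. Bernoulli random variables with success probability μ ∈ [0,1], let α ∈ [0,1] with μ > α, and set S = Σ_{i=1}^n L_i. Define the p-value p = P(Binom(n, α) ≤ S), i.e., p = F_{n,α}(S) where F_{n,α} is the cumulative distribution function of a Binomial(n, α) random variable. Then p is super-uniform: for every u ∈ [0,1], P(p ≤ u) ≤ u. -/
open MeasureTheory ProbabilityTheory

/-- The CDF of a Binomial(n, α) random variable evaluated at `k`:
`F_{n,α}(k) = Σ_{j=0}^{k} C(n,j) α^j (1-α)^{n-j}`. -/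
noncomputable def binomCDF (n : ℕ) (α : ℝ) (k : ℕ) : ℝ :=
  ∑ j ∈ Finset.range (k + 1), (n.choose j : ℝ) * α ^ j * (1 - α) ^ (n - j)

lemma binomCDF_nonneg {n : ℕ} {α : ℝ} (h0 : 0 ≤ α) (h1 : α ≤ 1) (k : ℕ) :
    0 ≤ binomCDF n α k := by
  apply Finset.sum_nonneg
  intro j _
  have : (0:ℝ) ≤ 1 - α := by linarith
  positivity

lemma binomCDF_mono {n : ℕ} {α : ℝ} (h0 : 0 ≤ α) (h1 : α ≤ 1) {k k' : ℕ} (hk : k ≤ k') :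
    binomCDF n α k ≤ binomCDF n α k' := by
  apply Finset.sum_le_sum_of_subset_of_nonneg
  · exact Finset.range_subset_range.2 (by omega)
  · intro j _ _
    have : (0:ℝ) ≤ 1 - α := by linarith
    positivity

lemma binomCDF_eq_one {n : ℕ} (α : ℝ) {k : ℕ} (hk : n ≤ k) : binomCDF n α k = 1 := by
  have h := add_pow α (1 - α) n
  have h1 : (α + (1 - α)) = (1:ℝ) := by ring
  rw [h1, one_pow] at h
  rw [binomCDF, ← Finset.sum_subset (Finset.range_subset_range.2 (by omega) :
      Finset.range (n+1) ⊆ Finset.range (k+1))]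
  · rw [eq_comm] at h
    rw [show (∑ j ∈ Finset.range (n+1), (n.choose j : ℝ) * α ^ j * (1 - α) ^ (n - j))
        = ∑ j ∈ Finset.range (n+1), α ^ j * (1 - α) ^ (n - j) * (n.choose j : ℝ) from
      Finset.sum_congr rfl (fun j _ => by ring), h]
  · intro j _ hj
    simp only [Finset.mem_range, not_lt] at hj
    rw [Nat.choose_eq_zero_of_lt (by omega)]
    simp

lemma binomCDF_zero (n : ℕ) (α : ℝ) : binomCDF n α 0 = (1 - α) ^ n := by
  simp [binomCDF]

lemma binomCDF_pascal_zero (n : ℕ) (α : ℝ) :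
    binomCDF (n + 1) α 0 = (1 - α) * binomCDF n α 0 := by
  simp only [binomCDF_zero, pow_succ]; ring

lemma binomCDF_pascal (n k : ℕ) (α : ℝ) :
    binomCDF (n + 1) α (k + 1) = (1 - α) * binomCDF n α (k + 1) + α * binomCDF n α k := by
  have hterm : ∀ j : ℕ, ((n+1).choose (j+1) : ℝ) * α ^ (j+1) * (1 - α) ^ (n + 1 - (j+1))
      = (1 - α) * ((n.choose (j+1) : ℝ) * α ^ (j+1) * (1 - α) ^ (n - (j+1)))
        + α * ((n.choose j : ℝ) * α ^ j * (1 - α) ^ (n - j)) := by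
    intro j
    rw [Nat.choose_succ_succ, Nat.cast_add]
    have h2 : n + 1 - (j + 1) = n - j := Nat.succ_sub_succ n j
    rcases le_or_gt (j + 1) n with hj | hj
    · have h3 : n - j = (n - (j+1)) + 1 := by omega
      rw [h2, h3, pow_succ]
      ring
    · rw [Nat.choose_eq_zero_of_lt hj, h2]
      push_cast
      ring
  unfold binomCDF
  rw [Finset.sum_range_succ' (fun j => ((n+1).choose j : ℝ) * α ^ j * (1 - α) ^ (n + 1 - j)) (k+1)]
  rw [Finset.sum_range_succ' (fun j => ((n).choose j : ℝ) * α ^ j * (1 - α) ^ (n - j)) (k+1)]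
  simp only [hterm]
  rw [Finset.sum_add_distrib, ← Finset.mul_sum, ← Finset.mul_sum]
  simp only [Nat.choose_zero_right, Nat.cast_one, pow_zero, Nat.sub_zero, one_mul, mul_one]
  rw [pow_succ]
  ring

lemma binom_aux {Ω : Type*} [MeasurableSpace Ω] (P : Measure Ω) [IsProbabilityMeasure P]
    {n : ℕ} (L : Fin n → Ω → ℕ) (hmeas : ∀ i, Measurable (L i))
    (hBool : ∀ i ω, L i ω ≤ 1)
    (hindep : iIndepFun L P)
    {μ α : ℝ} (hα0 : 0 ≤ α) (hαμ : α ≤ μ) (hμ1 : μ ≤ 1)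
    (hbern : ∀ i, P {ω | L i ω = 1} = ENNReal.ofReal μ)
    (s : Finset (Fin n)) :
    ∀ (k : ℕ), P {ω | ∑ i ∈ s, L i ω ≤ k} ≤ ENNReal.ofReal (binomCDF s.card α k) := by
  have hμ0 : 0 ≤ μ := le_trans hα0 hαμ
  have hα1 : α ≤ 1 := le_trans hαμ hμ1
  induction s using Finset.induction_on with
  | empty =>
    intro k
    simp only [Finset.sum_empty, Finset.card_empty]
    rw [binomCDF_eq_one α (Nat.zero_le k)]
    simp
  | @insert a t ha IH =>
    intro k
    set T : Ω → ℕ := fun ω => ∑ i ∈ t, L i ω with hT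
    have hTmeas : Measurable T := Finset.measurable_sum t (fun i _ => hmeas i)
    have hindepaT : IndepFun (L a) T P := by
      have h := (hindep.indepFun_finsetSum_of_notMem hmeas ha).symm
      have hsumT : (∑ j ∈ t, L j) = T := by funext ω; simp [hT]
      rwa [hsumT] at h
    have hA1 : P ((L a) ⁻¹' {1}) = ENNReal.ofReal μ := hbern a
    have hA0 : P ((L a) ⁻¹' {0}) = ENNReal.ofReal (1 - μ) := by
      have hcompl : (L a) ⁻¹' {0} = ((L a) ⁻¹' {1})ᶜ := by
        ext ω
        have := hBool a ω
        simp only [Set.mem_preimage, Set.mem_singleton_iff, Set.mem_compl_iff]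
        omega
      rw [hcompl, measure_compl (hmeas a (measurableSet_singleton 1)) (measure_ne_top P _), hA1,
        measure_univ, ENNReal.ofReal_sub 1 hμ0, ENNReal.ofReal_one]
    have hcard : (insert a t).card = t.card + 1 := Finset.card_insert_of_notMem ha
    have hFnn : ∀ m : ℕ, 0 ≤ binomCDF t.card α m := fun m => binomCDF_nonneg hα0 hα1 m
    have hset : {ω | ∑ i ∈ insert a t, L i ω ≤ k}
        = ((L a) ⁻¹' {0} ∩ T ⁻¹' (Set.Iic k)) ∪
          ((L a) ⁻¹' {1} ∩ T ⁻¹' {m | m + 1 ≤ k}) := by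
      ext ω
      have hb := hBool a ω
      simp only [Set.mem_setOf_eq, Finset.sum_insert ha, Set.mem_union, Set.mem_inter_iff,
        Set.mem_preimage, Set.mem_singleton_iff, Set.mem_Iic, hT]
      omega
    have hdisj : Disjoint ((L a) ⁻¹' {0} ∩ T ⁻¹' (Set.Iic k))
        ((L a) ⁻¹' {1} ∩ T ⁻¹' {m | m + 1 ≤ k}) := by
      apply Set.disjoint_left.2
      rintro ω ⟨h0, -⟩ ⟨h1, -⟩
      simp only [Set.mem_preimage, Set.mem_singleton_iff] at h0 h1
      omega
    have hms : ∀ (c : ℕ) (A : Set ℕ), MeasurableSet ((L a) ⁻¹' {c} ∩ T ⁻¹' A) :=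
      fun c A => ((hmeas a) (measurableSet_singleton c)).inter (hTmeas trivial)
    rw [hset, measure_union hdisj (hms 1 _),
      hindepaT.measure_inter_preimage_eq_mul _ _ (measurableSet_singleton 0) trivial,
      hindepaT.measure_inter_preimage_eq_mul _ _ (measurableSet_singleton 1) trivial,
      hA0, hA1]
    have hB0 : P (T ⁻¹' (Set.Iic k)) ≤ ENNReal.ofReal (binomCDF t.card α k) := IH k
    rcases k with _ | k'
    · have hempty : ({m : ℕ | m + 1 ≤ 0} : Set ℕ) = ∅ := by ext m; simp
      rw [hempty]
      simp only [Set.preimage_empty, measure_empty, mul_zero, add_zero]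
      calc ENNReal.ofReal (1 - μ) * P (T ⁻¹' Set.Iic 0)
          ≤ ENNReal.ofReal (1 - μ) * ENNReal.ofReal (binomCDF t.card α 0) :=
            mul_le_mul_right hB0 _
        _ = ENNReal.ofReal ((1 - μ) * binomCDF t.card α 0) :=
            (ENNReal.ofReal_mul (by linarith)).symm
        _ ≤ ENNReal.ofReal (binomCDF (insert a t).card α 0) := by
            apply ENNReal.ofReal_le_ofReal
            rw [hcard, binomCDF_pascal_zero]
            exact mul_le_mul_of_nonneg_right (by linarith) (hFnn 0)
    · have hB1eq : ({m : ℕ | m + 1 ≤ k' + 1} : Set ℕ) = Set.Iic k' := by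
        ext m; simp [Nat.lt_succ_iff]
      rw [hB1eq]
      have hB1 : P (T ⁻¹' (Set.Iic k')) ≤ ENNReal.ofReal (binomCDF t.card α k') := IH k'
      calc ENNReal.ofReal (1 - μ) * P (T ⁻¹' Set.Iic (k' + 1))
            + ENNReal.ofReal μ * P (T ⁻¹' Set.Iic k')
          ≤ ENNReal.ofReal (1 - μ) * ENNReal.ofReal (binomCDF t.card α (k' + 1))
            + ENNReal.ofReal μ * ENNReal.ofReal (binomCDF t.card α k') :=
            add_le_add (mul_le_mul_right hB0 _) (mul_le_mul_right hB1 _)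
        _ = ENNReal.ofReal ((1 - μ) * binomCDF t.card α (k' + 1) + μ * binomCDF t.card α k') := by
            rw [← ENNReal.ofReal_mul (by linarith), ← ENNReal.ofReal_mul hμ0,
              ← ENNReal.ofReal_add (mul_nonneg (by linarith) (hFnn _)) (mul_nonneg hμ0 (hFnn _))]
        _ ≤ ENNReal.ofReal (binomCDF (insert a t).card α (k' + 1)) := by
            apply ENNReal.ofReal_le_ofReal
            rw [hcard, binomCDF_pascal]
            have hmono := binomCDF_mono (n := t.card) hα0 hα1 (Nat.le_succ k')
            nlinarith [hFnn k', hFnn (k' + 1)]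

/-- **Theorem 2 (Binomial tail bound p-values).**
Let `L 1, …, L n` be i.i.d. Bernoulli(μ) losses (i.e. `{0,1}`-valued, independent, each equal
to `1` with probability `μ`), let `α ∈ [0,1]` with `μ > α`, and let `S = Σ_i L i`. Then the
p-value `p = P(Binom(n,α) ≤ S) = F_{n,α}(S)` is super-uniform:
`P(p ≤ u) ≤ u` for every `u ∈ [0,1]`. -/
theorem binomial_tail_pvalue_superuniform
    {Ω : Type*} [MeasurableSpace Ω] (P : Measure Ω) [IsProbabilityMeasure P]
    {n : ℕ} (L : Fin n → Ω → ℕ)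
    (hmeas : ∀ i, Measurable (L i))
    (hBool : ∀ i ω, L i ω ≤ 1)
    (hindep : iIndepFun L P)
    (μ α : ℝ) (hμ : μ ∈ Set.Icc (0 : ℝ) 1) (hα : α ∈ Set.Icc (0 : ℝ) 1) (hμα : μ > α)
    (hbern : ∀ i, P {ω | L i ω = 1} = ENNReal.ofReal μ)
    (u : ℝ) (hu : u ∈ Set.Icc (0 : ℝ) 1) :
    P {ω | binomCDF n α (∑ i, L i ω) ≤ u} ≤ ENNReal.ofReal u := by
  obtain ⟨hα0, hα1⟩ := hα
  obtain ⟨hμ0, hμ1⟩ := hμ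
  obtain ⟨hu0, hu1⟩ := hu
  have hαμ : α ≤ μ := le_of_lt hμα
  by_cases h0 : binomCDF n α 0 ≤ u
  · classical
    set K : ℕ := Nat.findGreatest (fun k => binomCDF n α k ≤ u) n with hK
    have hKspec : binomCDF n α K ≤ u :=
      Nat.findGreatest_spec (P := fun k => binomCDF n α k ≤ u) (Nat.zero_le n) h0
    have hsub : {ω | binomCDF n α (∑ i, L i ω) ≤ u} ⊆ {ω | ∑ i, L i ω ≤ K} := by
      intro ω hω
      simp only [Set.mem_setOf_eq] at hω ⊢
      by_contra hgt
      push_neg at hgt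
      have hSn : ∑ i, L i ω ≤ n := by
        calc ∑ i, L i ω ≤ ∑ _i : Fin n, 1 := Finset.sum_le_sum (fun i _ => hBool i ω)
          _ = n := by simp
      exact Nat.findGreatest_is_greatest (P := fun k => binomCDF n α k ≤ u) hgt hSn hω
    calc P {ω | binomCDF n α (∑ i, L i ω) ≤ u}
        ≤ P {ω | ∑ i, L i ω ≤ K} := measure_mono hsub
      _ ≤ ENNReal.ofReal (binomCDF (Finset.univ : Finset (Fin n)).card α K) :=
          binom_aux P L hmeas hBool hindep hα0 hαμ hμ1 hbern Finset.univ K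
      _ ≤ ENNReal.ofReal u := by
          apply ENNReal.ofReal_le_ofReal
          simpa [Finset.card_univ] using hKspec
  · push_neg at h0
    have hempty : {ω | binomCDF n α (∑ i, L i ω) ≤ u} = ∅ := by
      ext ω
      simp only [Set.mem_setOf_eq, Set.mem_empty_iff_false, iff_false, not_le]
      calc u < binomCDF n α 0 := h0
        _ ≤ binomCDF n α (∑ i, L i ω) := binomCDF_mono hα0 hα1 (Nat.zero_le _)
    rw [hempty]
    simp
end

section
/- Let Λ be a finite nonempty set of hyperparameter configurations, and for each λ ∈ Λ let L_λ be an integrable loss with (deterministic) expectation E[L_λ], and let p_λ be a [0,1]-valued random variable (a p-value computed from the calibration data). Fix α ∈ ℝ and δ ∈ (0,1]. Let Λ_0 = {λ ∈ Λ : E[L_λ] > α} be the set of true null hypotheses, and assume each p_λ with λ ∈ Λ_0 is super-uniform, i.e., P(p_λ ≤ u) ≤ u for all u ∈ [0,1]. Define the Bonferroni selection Λ_valid = {λ ∈ Λ : p_λ ≤ δ/|Λ|}. Then P( sup_{λ ∈ Λ_valid} E[L_λ] ≤ α ) ≥ 1 − δ, where the supremum over the empty set is interpreted as being ≤ α (i.e.,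 the event is that every λ ∈ Λ_valid satisfies E[L_λ] ≤ α). -/
open MeasureTheory

/-- **Theorem 1 (Learn Then Test), instantiated with the Bonferroni correction.**
Let `Λ` be a finite nonempty set of configurations, `L λ` an integrable loss with expectation
`E[L λ] = ∫ L λ dP`, and `p λ` a `[0,1]`-valued p-value. Assume each `p λ` with
`E[L λ] > α` (a true null) is super-uniform. Then the Bonferroni selection
`Λ_valid(ω) = {λ : p λ ω ≤ δ / |Λ|}` satisfies
`P(every λ ∈ Λ_valid has E[L λ] ≤ α) ≥ 1 - δ`. -/
theorem learn_then_test_bonferroni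
    {Ω : Type*} [MeasurableSpace Ω] (P : Measure Ω) [IsProbabilityMeasure P]
    {Λ : Type*} [Fintype Λ] [Nonempty Λ]
    (L : Λ → Ω → ℝ) (hL : ∀ l, Integrable (L l) P)
    (p : Λ → Ω → ℝ) (hp01 : ∀ l ω, p l ω ∈ Set.Icc (0 : ℝ) 1)
    (α : ℝ) (δ : ℝ) (hδ : δ ∈ Set.Ioc (0 : ℝ) 1)
    (hsuper : ∀ l, α < ∫ ω, L l ω ∂P →
      ∀ u ∈ Set.Icc (0 : ℝ) 1, P {ω | p l ω ≤ u} ≤ ENNReal.ofReal u) :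
    P {ω | ∀ l, p l ω ≤ δ / (Fintype.card Λ : ℝ) → ∫ ω', L l ω' ∂P ≤ α}
      ≥ ENNReal.ofReal (1 - δ) := by
  obtain ⟨hδ0, hδ1⟩ := hδ
  have hN : (1 : ℝ) ≤ (Fintype.card Λ : ℝ) := by exact_mod_cast Fintype.card_pos
  set t := δ / (Fintype.card Λ : ℝ) with ht
  have ht0 : 0 ≤ t := le_of_lt (div_pos hδ0 (by linarith))
  have ht1 : t ≤ 1 := by
    have : t ≤ δ := div_le_self (le_of_lt hδ0) hN
    linarith
  set E := {ω | ∀ l, p l ω ≤ t → ∫ ω', L l ω' ∂P ≤ α} with hE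
  have hsub : Eᶜ ⊆ ⋃ l : Λ, {ω | p l ω ≤ t ∧ α < ∫ ω', L l ω' ∂P} := by
    intro ω hω
    simp only [hE, Set.mem_compl_iff, Set.mem_setOf_eq, not_forall] at hω
    obtain ⟨l, hlt, hgt⟩ := hω
    exact Set.mem_iUnion.2 ⟨l, hlt, lt_of_not_ge hgt⟩
  have hbound : ∀ l : Λ, P {ω | p l ω ≤ t ∧ α < ∫ ω', L l ω' ∂P} ≤ ENNReal.ofReal t := by
    intro l
    by_cases h : α < ∫ ω', L l ω' ∂P
    · calc P {ω | p l ω ≤ t ∧ α < ∫ ω', L l ω' ∂P} ≤ P {ω | p l ω ≤ t} :=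
          measure_mono (fun ω hω => hω.1)
        _ ≤ ENNReal.ofReal t := hsuper l h t ⟨ht0, ht1⟩
    · have hempty : {ω | p l ω ≤ t ∧ α < ∫ ω', L l ω' ∂P} = ∅ := by
        ext ω; simp [h]
      simp [hempty]
  have hcompl : P Eᶜ ≤ ENNReal.ofReal δ := by
    calc P Eᶜ ≤ ∑' l : Λ, P {ω | p l ω ≤ t ∧ α < ∫ ω', L l ω' ∂P} :=
          le_trans (measure_mono hsub) (measure_iUnion_le _)
      _ = ∑ l : Λ, P {ω | p l ω ≤ t ∧ α < ∫ ω', L l ω' ∂P} := tsum_fintype _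
      _ ≤ ∑ l : Λ, ENNReal.ofReal t := Finset.sum_le_sum (fun l _ => hbound l)
      _ = (Fintype.card Λ : ENNReal) * ENNReal.ofReal t := by
          simp [Finset.sum_const, nsmul_eq_mul]
      _ = ENNReal.ofReal δ := by
          rw [show ((Fintype.card Λ : ENNReal)) = ENNReal.ofReal (Fintype.card Λ : ℝ) by
                simp, ← ENNReal.ofReal_mul (by positivity)]
          congr 1
          rw [ht]
          field_simp [ne_of_gt (lt_of_lt_of_le one_pos hN)]
  have h1 : (1 : ENNReal) ≤ P E + P Eᶜ := by
    rw [← measure_univ (μ := P)]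
    refine le_trans (measure_mono ?_) (measure_union_le E Eᶜ)
    simp
  calc ENNReal.ofReal (1 - δ) = 1 - ENNReal.ofReal δ := by
        rw [ENNReal.ofReal_sub _ (le_of_lt hδ0)]; simp
    _ ≤ P E := by
        rw [tsub_le_iff_right]
        calc (1 : ENNReal) ≤ P E + P Eᶜ := h1
          _ ≤ P E + ENNReal.ofReal δ := add_le_add (le_refl _) hcompl
end

section
/- Let (X_1, Y_1), …, (X_n, Y_n), (X_test, Y_test) be i.i.d. random pairs taking values in X × Y, let S : X × Y → ℝ be a measurable non-conformity score function, and let α ∈ (0,1) with ⌈(n+1)(1−α)⌉ ≤ n. Let q_α be the ⌈(n+1)(1−α)⌉-th smallest value among the calibration scores S(X_1, Y_1), …, S(X_n, Y_n), and define the prediction set C(X_test) = { y ∈ Y : S(X_test, y) ≤ q_α }. Then P( Y_test ∈ C(X_test) ) ≥ 1 − α. -/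
open MeasureTheory ProbabilityTheory
open scoped ENNReal NNReal

noncomputable def orderStat (l : List ℝ) (k : ℕ) : ℝ :=
  (l.insertionSort (· ≤ ·)).getD (k - 1) 0

/-- counting in a sorted list -/
lemma sorted_le_getElem_iff (s : List ℝ) (hs : s.Pairwise (· ≤ ·)) (m : ℕ) (hm : m < s.length)
    (x : ℝ) : x ≤ s[m] ↔ s.countP (fun y => decide (y < x)) ≤ m := by
  constructor
  · intro hx
    have hsplit : s = s.take m ++ s.drop m := (List.take_append_drop m s).symm
    have h2 : (s.drop m).countP (fun y => decide (y < x)) = 0 := by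
      rw [List.countP_eq_zero]
      intro y hy
      obtain ⟨i, hi, rfl⟩ := List.mem_iff_getElem.mp hy
      rw [List.getElem_drop]
      have hmi : m + i < s.length := by
        have := hi; rw [List.length_drop] at this; omega
      have h1 : s[m] ≤ s[m + i] := by
        have := hs.rel_get_of_le (a := ⟨m, hm⟩) (b := ⟨m + i, hmi⟩) (by simp [Fin.le_def])
        simpa using this
      simp only [decide_eq_true_eq]
      push_neg
      exact le_trans hx h1
    calc s.countP (fun y => decide (y < x))
        = (s.take m).countP (fun y => decide (y < x))
          + (s.drop m).countP (fun y => decide (y < x)) := by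
          conv_lhs => rw [hsplit]
          rw [List.countP_append]
      _ ≤ (s.take m).length + 0 := by
          rw [h2]; exact Nat.add_le_add List.countP_le_length le_rfl
      _ ≤ m := by rw [List.length_take]; omega
  · intro hc
    by_contra hx
    push_neg at hx
    have h1 : (s.take (m+1)).countP (fun y => decide (y < x)) = (s.take (m+1)).length := by
      rw [List.countP_eq_length]
      intro y hy
      obtain ⟨i, hi, rfl⟩ := List.mem_iff_getElem.mp hy
      have hi' : i < m + 1 := by
        have := hi; rw [List.length_take] at this; omega
      rw [List.getElem_take]
      have hii : i < s.length := by omega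
      have h2 : s[i] ≤ s[m] := by
        have := hs.rel_get_of_le (a := ⟨i, hii⟩) (b := ⟨m, hm⟩) (by simp [Fin.le_def]; omega)
        simpa using this
      simp only [decide_eq_true_eq]
      exact lt_of_le_of_lt h2 hx
    have hlen : (s.take (m+1)).length = m + 1 := by
      rw [List.length_take]; omega
    have h3 : (s.take (m+1)).countP (fun y => decide (y < x)) ≤ s.countP (fun y => decide (y < x)) :=
      ((s.take_sublist (m+1)).subperm).countP_le _
    omega

lemma le_orderStat_iff (l : List ℝ) (k : ℕ) (hk1 : 1 ≤ k) (hk2 : k ≤ l.length) (x : ℝ) :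
    x ≤ orderStat l k ↔ l.countP (fun y => decide (y < x)) ≤ k - 1 := by
  set s := l.insertionSort (· ≤ ·) with hsdef
  have hlen : s.length = l.length := List.length_insertionSort _ _
  have hs : s.Pairwise (· ≤ ·) := List.pairwise_insertionSort _ _
  have hm : k - 1 < s.length := by omega
  have hcount : l.countP (fun y => decide (y < x)) = s.countP (fun y => decide (y < x)) :=
    ((List.perm_insertionSort _ l).countP_eq _).symm
  rw [hcount]
  have : orderStat l k = s[k-1] := by
    rw [orderStat, ← hsdef, List.getD_eq_getElem _ _ hm]
  rw [this]
  exact sorted_le_getElem_iff s hs (k-1) hm x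

lemma countP_ofFn {m : ℕ} (f : Fin m → ℝ) (p : ℝ → Bool) :
    (List.ofFn f).countP p = ∑ i, if p (f i) then 1 else 0 := by
  induction m with
  | zero => simp
  | succ m ih =>
    rw [List.ofFn_succ, List.countP_cons, Fin.sum_univ_succ, ih (fun i => f i.succ)]
    by_cases h : p (f 0) <;> simp [h] <;> omega

lemma card_filter_eq_countP {m : ℕ} (f : Fin m → ℝ) (p : ℝ → Bool) :
    (Finset.univ.filter fun i => p (f i)).card = (List.ofFn f).countP p := by
  rw [countP_ofFn, Finset.card_filter]

lemma le_countP_le_orderStat (l : List ℝ) (k : ℕ) (hk1 : 1 ≤ k) (hk2 : k ≤ l.length) :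
    k ≤ l.countP (fun y => decide (y ≤ orderStat l k)) := by
  set s := l.insertionSort (· ≤ ·) with hsdef
  have hlen : s.length = l.length := List.length_insertionSort _ _
  have hs : s.Pairwise (· ≤ ·) := List.pairwise_insertionSort _ _
  have hm : k - 1 < s.length := by omega
  have hv : orderStat l k = s[k-1] := by
    rw [orderStat, ← hsdef, List.getD_eq_getElem _ _ hm]
  have hcount : l.countP (fun y => decide (y ≤ orderStat l k))
      = s.countP (fun y => decide (y ≤ orderStat l k)) :=
    ((List.perm_insertionSort _ l).countP_eq _).symm
  rw [hcount]
  have h1 : (s.take k).countP (fun y => decide (y ≤ orderStat l k)) = (s.take k).length := by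
    rw [List.countP_eq_length]
    intro y hy
    obtain ⟨i, hi, rfl⟩ := List.mem_iff_getElem.mp hy
    have hi' : i < k := by
      have := hi; rw [List.length_take] at this; omega
    rw [List.getElem_take]
    have hii : i < s.length := by omega
    have h2 : s[i] ≤ s[k-1] := by
      have := hs.rel_get_of_le (a := ⟨i, hii⟩) (b := ⟨k-1, hm⟩) (by simp [Fin.le_def]; omega)
      simpa using this
    simp only [decide_eq_true_eq]
    rw [hv]; exact h2
  have hlen2 : (s.take k).length = k := by rw [List.length_take]; omega
  have h3 : (s.take k).countP (fun y => decide (y ≤ orderStat l k))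
      ≤ s.countP (fun y => decide (y ≤ orderStat l k)) :=
    ((s.take_sublist k).subperm).countP_le _
  omega

lemma pigeonhole_rank {m : ℕ} (t : Fin (m+1) → ℝ) (k : ℕ) (hk1 : 1 ≤ k) (hk2 : k ≤ m+1) :
    k ≤ (Finset.univ.filter fun j =>
        ((List.ofFn t).countP fun y => decide (y < t j)) ≤ k - 1).card := by
  set l := List.ofFn t with hl
  have hlen : l.length = m + 1 := by simp [hl]
  set v := orderStat l k with hv
  have hsub : (Finset.univ.filter fun j => decide (t j ≤ v) = true)
      ⊆ (Finset.univ.filter fun j =>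
        ((List.ofFn t).countP fun y => decide (y < t j)) ≤ k - 1) := by
    intro j hj
    simp only [Finset.mem_filter, decide_eq_true_eq] at hj ⊢
    exact ⟨Finset.mem_univ j, (le_orderStat_iff l k hk1 (by omega) (t j)).mp hj.2⟩
  refine le_trans ?_ (Finset.card_le_card hsub)
  rw [card_filter_eq_countP t (fun y => decide (y ≤ v))]
  exact le_countP_le_orderStat l k hk1 (by omega)


lemma joint_map_eq_pi {Ω : Type*} [MeasurableSpace Ω] (P : Measure Ω) [IsProbabilityMeasure P]
    {m : ℕ} (T : Fin m → Ω → ℝ) (hT : ∀ i, Measurable (T i))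
    (hindep : iIndepFun T P) :
    P.map (fun ω i => T i ω) = Measure.pi (fun i => P.map (T i)) := by
  haveI : ∀ i, IsProbabilityMeasure (P.map (T i)) :=
    fun i => Measure.isProbabilityMeasure_map (hT i).aemeasurable
  refine (Measure.pi_eq (μ := fun i => P.map (T i)) fun s hs => ?_).symm
  rw [Measure.map_apply (measurable_pi_lambda _ hT) (MeasurableSet.univ_pi hs)]
  have hpre : (fun ω i => T i ω) ⁻¹' (Set.univ.pi s) = ⋂ i, T i ⁻¹' s i := by
    ext ω; simp [Set.mem_pi]
  rw [hpre]
  have h2 : (⋂ i, T i ⁻¹' s i) = ⋂ i ∈ Finset.univ, T i ⁻¹' s i := by simp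
  rw [h2, hindep.measure_inter_preimage_eq_mul Finset.univ (fun i _ => hs i)]
  exact Finset.prod_congr rfl fun i _ => (Measure.map_apply (hT i) (hs i)).symm

lemma pi_map_perm {m : ℕ} (μ : Measure ℝ) [IsProbabilityMeasure μ] (σ : Equiv.Perm (Fin m)) :
    (Measure.pi fun _ : Fin m => μ).map (fun t i => t (σ i)) = Measure.pi fun _ => μ := by
  refine (Measure.pi_eq (μ := fun _ => μ) fun s hs => ?_).symm
  rw [Measure.map_apply (f := fun (t : Fin m → ℝ) i => t (σ i))
    (measurable_pi_lambda _ fun i => measurable_pi_apply (σ i)) (MeasurableSet.univ_pi hs)]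
  have hpre : (fun (t : Fin m → ℝ) i => t (σ i)) ⁻¹' (Set.univ.pi s)
      = Set.univ.pi (fun j => s (σ.symm j)) := by
    ext t
    simp only [Set.mem_preimage, Set.mem_pi, Set.mem_univ, true_implies]
    constructor
    · intro h j; have := h (σ.symm j); simpa using this
    · intro h i; simpa using h (σ i)
  rw [hpre, Measure.pi_pi]
  exact Equiv.prod_comp σ.symm fun i => μ (s i)

/-- **Split conformal prediction coverage guarantee (Section 2.1).**
Let `Z 0, …, Z n` be i.i.d. pairs in `𝒳 × 𝒴` (the first `n` forming the calibration set and
`Z n = (X_test, Y_test)`), `S : 𝒳 × 𝒴 → ℝ` a measurable non-conformity score, and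
`α ∈ (0,1)` with `⌈(n+1)(1-α)⌉ ≤ n`. Let `q_α` be the `⌈(n+1)(1-α)⌉`-th smallest calibration
score and `C(X_test) = {y | S (X_test, y) ≤ q_α}`. Then `P(Y_test ∈ C(X_test)) ≥ 1 - α`. -/
theorem split_conformal_prediction_set_coverage
    {Ω : Type*} [MeasurableSpace Ω] (P : Measure Ω) [IsProbabilityMeasure P]
    {𝒳 𝒴 : Type*} [MeasurableSpace 𝒳] [MeasurableSpace 𝒴]
    {n : ℕ} (Z : Fin (n + 1) → Ω → 𝒳 × 𝒴)
    (hmeas : ∀ i, Measurable (Z i))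
    (hindep : iIndepFun Z P)
    (hident : ∀ i j, IdentDistrib (Z i) (Z j) P P)
    (S : 𝒳 × 𝒴 → ℝ) (hS : Measurable S)
    (α : ℝ) (hα : α ∈ Set.Ioo (0 : ℝ) 1)
    (hk : ⌈((n : ℝ) + 1) * (1 - α)⌉₊ ≤ n) :
    P {ω | (Z (Fin.last n) ω).2 ∈
        {y : 𝒴 | S ((Z (Fin.last n) ω).1, y) ≤
          orderStat (List.ofFn fun i : Fin n => S (Z i.castSucc ω)) ⌈((n : ℝ) + 1) * (1 - α)⌉₊}}
      ≥ ENNReal.ofReal (1 - α) := by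
  classical
  obtain ⟨hα0, hα1⟩ := hα
  set k := ⌈((n : ℝ) + 1) * (1 - α)⌉₊ with hkdef
  have hk1 : 1 ≤ k := by
    rw [hkdef]
    exact Nat.one_le_iff_ne_zero.mpr (by
      simp only [ne_eq, Nat.ceil_eq_zero, not_le]
      have h1a : (0:ℝ) < 1 - α := by linarith
      positivity)
  -- the scores
  set T : Fin (n + 1) → Ω → ℝ := fun i ω => S (Z i ω) with hTdef
  have hTmeas : ∀ i, Measurable (T i) := fun i => hS.comp (hmeas i)
  have hTindep : iIndepFun T P := hindep.comp (fun _ => S) (fun _ => hS)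
  have hTident : ∀ i j, IdentDistrib (T i) (T j) P P := fun i j => (hident i j).comp hS
  set F : Ω → (Fin (n + 1) → ℝ) := fun ω i => T i ω with hFdef
  have hF : Measurable F := measurable_pi_lambda _ hTmeas
  set μ : Measure ℝ := P.map (T (Fin.last n)) with hμdef
  haveI : IsProbabilityMeasure μ := Measure.isProbabilityMeasure_map (hTmeas _).aemeasurable
  have hjoint : P.map F = Measure.pi fun _ => μ := by
    rw [joint_map_eq_pi P T hTmeas hTindep]
    congr 1
    funext i
    exact (hTident i (Fin.last n)).map_eq
  -- rank function and events
  set g : Fin (n + 1) → (Fin (n + 1) → ℝ) → ℕ :=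
    fun j t => ∑ i, if t i < t j then 1 else 0 with hgdef
  have hgmeas : ∀ j, Measurable (g j) := by
    intro j
    exact Finset.measurable_sum _ fun i _ =>
      Measurable.ite (measurableSet_lt (measurable_pi_apply i) (measurable_pi_apply j))
        measurable_const measurable_const
  set A : Fin (n + 1) → Set (Fin (n + 1) → ℝ) := fun j => {t | g j t ≤ k - 1} with hAdef
  have hA : ∀ j, MeasurableSet (A j) := fun j => measurableSet_le (hgmeas j) measurable_const
  have hgcount : ∀ (t : Fin (n+1) → ℝ) j,
      g j t = (List.ofFn t).countP fun y => decide (y < t j) := by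
    intro t j
    rw [countP_ofFn]
    exact Finset.sum_congr rfl fun i _ => by by_cases h : t i < t j <;> simp [h]
  set E : Fin (n + 1) → Set Ω := fun j => F ⁻¹' A j with hEdef
  have hE : ∀ j, MeasurableSet (E j) := fun j => hF (hA j)
  -- exchangeability: all events have the same probability
  have hPE : ∀ j, P (E j) = P (E (Fin.last n)) := by
    intro j
    set σ : Equiv.Perm (Fin (n + 1)) := Equiv.swap j (Fin.last n) with hσdef
    have hAperm : A j = (fun (t : Fin (n+1) → ℝ) i => t (σ i)) ⁻¹' A (Fin.last n) := by
      ext t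
      simp only [Set.mem_preimage, hAdef, Set.mem_setOf_eq, hgdef]
      have e1 : (∑ i, if t (σ i) < t (σ (Fin.last n)) then 1 else 0)
          = ∑ i, if t i < t j then 1 else 0 := by
        have h1 : σ (Fin.last n) = j := Equiv.swap_apply_right j (Fin.last n)
        rw [h1]
        exact Equiv.sum_comp σ (fun i => if t i < t j then 1 else 0)
      rw [e1]
    have hmeasperm : Measurable (fun (t : Fin (n+1) → ℝ) i => t (σ i)) :=
      measurable_pi_lambda _ fun i => measurable_pi_apply (σ i)
    calc P (E j) = (P.map F) (A j) := (Measure.map_apply hF (hA j)).symm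
      _ = (Measure.pi fun _ => μ) (A j) := by rw [hjoint]
      _ = (Measure.pi fun _ => μ) ((fun (t : Fin (n+1) → ℝ) i => t (σ i)) ⁻¹' A (Fin.last n)) := by
          rw [← hAperm]
      _ = ((Measure.pi fun _ => μ).map (fun (t : Fin (n+1) → ℝ) i => t (σ i))) (A (Fin.last n)) :=
          (Measure.map_apply hmeasperm (hA (Fin.last n))).symm
      _ = (Measure.pi fun _ => μ) (A (Fin.last n)) := by rw [pi_map_perm]
      _ = (P.map F) (A (Fin.last n)) := by rw [hjoint]
      _ = P (E (Fin.last n)) := Measure.map_apply hF (hA (Fin.last n))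
  -- pointwise pigeonhole bound
  have hpt : ∀ ω, (k : ℝ≥0∞) ≤ ∑ j, (E j).indicator (fun _ => (1 : ℝ≥0∞)) ω := by
    intro ω
    have hcard := pigeonhole_rank (F ω) k hk1 (by omega)
    have hcard2 : k ≤ (Finset.univ.filter fun j => ω ∈ E j).card := by
      refine le_trans hcard (le_of_eq ?_)
      congr 1
      refine Finset.filter_congr fun j _ => ?_
      simp only [hEdef, Set.mem_preimage, hAdef, Set.mem_setOf_eq, hgcount (F ω) j]
    calc (k : ℝ≥0∞) ≤ ((Finset.univ.filter fun j => ω ∈ E j).card : ℝ≥0∞) := by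
          exact_mod_cast hcard2
      _ = ∑ j, (E j).indicator (fun _ => (1 : ℝ≥0∞)) ω := by
          rw [Finset.card_filter]
          push_cast
          refine Finset.sum_congr rfl fun j _ => ?_
          by_cases h : ω ∈ E j <;> simp [Set.indicator_apply, h]
  -- integrate
  have hsum : (k : ℝ≥0∞) ≤ (n + 1 : ℕ) * P (E (Fin.last n)) := by
    have h1 : (k : ℝ≥0∞) ≤ ∫⁻ ω, ∑ j, (E j).indicator (fun _ => (1 : ℝ≥0∞)) ω ∂P := by
      calc (k : ℝ≥0∞) = ∫⁻ _, (k : ℝ≥0∞) ∂P := by simp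
        _ ≤ _ := lintegral_mono hpt
    rw [lintegral_finset_sum _ (fun j _ => (measurable_const.indicator (hE j)))] at h1
    have h2 : ∀ j, ∫⁻ ω, (E j).indicator (fun _ => (1 : ℝ≥0∞)) ω ∂P = P (E j) := by
      intro j
      exact lintegral_indicator_one (hE j)
    simp only [h2, hPE] at h1
    simpa [Finset.sum_const, nsmul_eq_mul] using h1
  -- identify the target event with E (last)
  have hset : {ω | (Z (Fin.last n) ω).2 ∈
        {y : 𝒴 | S ((Z (Fin.last n) ω).1, y) ≤
          orderStat (List.ofFn fun i : Fin n => S (Z i.castSucc ω)) k}} = E (Fin.last n) := by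
    ext ω
    simp only [Set.mem_setOf_eq, hEdef, Set.mem_preimage, hAdef]
    have hprod : ((Z (Fin.last n) ω).1, (Z (Fin.last n) ω).2) = Z (Fin.last n) ω := rfl
    rw [hprod]
    have hl : (List.ofFn fun i : Fin n => S (Z i.castSucc ω)).length = n := by simp
    rw [le_orderStat_iff _ k hk1 (by omega)]
    have hcc : (List.ofFn fun i : Fin n => S (Z i.castSucc ω)).countP
        (fun y => decide (y < S (Z (Fin.last n) ω))) = g (Fin.last n) (F ω) := by
      rw [countP_ofFn]
      have hgg : g (Fin.last n) (F ω)
          = ∑ i : Fin (n + 1), if T i ω < T (Fin.last n) ω then 1 else 0 := rfl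
      rw [hgg, Fin.sum_univ_castSucc]
      simp only [lt_irrefl, if_false, add_zero]
      exact Finset.sum_congr rfl fun i _ => by
        by_cases h : S (Z i.castSucc ω) < S (Z (Fin.last n) ω) <;>
          simp [h, hTdef]
    rw [hcc]
  rw [hset]
  -- final arithmetic
  have hceil : ((n : ℝ) + 1) * (1 - α) ≤ k := Nat.le_ceil _
  have hfin : ENNReal.ofReal (1 - α) * ((n + 1 : ℕ) : ℝ≥0∞) ≤
      P (E (Fin.last n)) * ((n + 1 : ℕ) : ℝ≥0∞) := by
    calc ENNReal.ofReal (1 - α) * ((n + 1 : ℕ) : ℝ≥0∞)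
        = ENNReal.ofReal ((1 - α) * ((n : ℝ) + 1)) := by
          rw [ENNReal.ofReal_mul (by linarith)]
          congr 1
          rw [← ENNReal.ofReal_natCast (n + 1)]
          push_cast
          ring_nf
      _ ≤ ENNReal.ofReal (k : ℝ) := by
          apply ENNReal.ofReal_le_ofReal
          linarith [hceil]
      _ = (k : ℝ≥0∞) := ENNReal.ofReal_natCast k
      _ ≤ (n + 1 : ℕ) * P (E (Fin.last n)) := hsum
      _ = P (E (Fin.last n)) * ((n + 1 : ℕ) : ℝ≥0∞) := mul_comm _ _
  exact (ENNReal.mul_le_mul_iff_left (by exact_mod_cast Nat.succ_ne_zero n)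
    (ENNReal.natCast_ne_top _)).mp hfin
end
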